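/- Two presentations P and Q present isomorphic monoids, ⟦P⟧ ≅ ⟦Q⟧, if and only if there exist a presentation R and morphisms of presentations f : P → R and g : Q → R such that the induced monoid homomorphisms ⟦f⟧ : ⟦P⟧ → ⟦R⟧ and ⟦g⟧ : ⟦Q⟧ → ⟦R⟧ are isomorphisms. -/

import Mathlib

/-- A presentation of a monoid: a type of generators and a set of relations
between words (elements of the free monoid) over the generators. -/
structure MonPres : Type 1 where
  gen : Type
  rel : Set (FreeMonoid gen × FreeMonoid gen)

namespace MonPres

/-- The congruence on the free monoid generated by the relations. -/
def con (P : MonPres) : Con (FreeMonoid P.gen) :=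
  conGen fun u v => (u, v) ∈ P.rel

/-- The monoid presented by a presentation. -/
abbrev Presented (P : MonPres) : Type := P.con.Quotient

end MonPres

/-- A morphism of presentations. -/
structure MonPresHom (P Q : MonPres) where
  toFun : P.gen → Q.gen
  map_rel : ∀ p ∈ P.rel,
    (FreeMonoid.map toFun p.1, FreeMonoid.map toFun p.2) ∈ Q.rel

namespace MonPresHom

/-- The monoid homomorphism induced on presented monoids. -/
def induced {P Q : MonPres} (f : MonPresHom P Q) : P.Presented →* Q.Presented :=
  Con.lift P.con ((Con.mk' Q.con).comp (FreeMonoid.map f.toFun)) (by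
    refine Con.conGen_le.mpr ?_
    intro x y hxy
    simp only [Con.ker_rel, MonoidHom.comp_apply, Con.coe_mk']
    exact (Con.eq _).mpr (ConGen.Rel.of _ _ (f.map_rel (x, y) hxy)))

/-- Identity morphism of presentations. -/
def id (P : MonPres) : MonPresHom P P where
  toFun := _root_.id
  map_rel := by intro p hp; simpa using hp

/-- Composition of morphisms of presentations. -/
def comp {P Q R : MonPres} (g : MonPresHom Q R) (f : MonPresHom P Q) :
    MonPresHom P R where
  toFun := g.toFun ∘ f.toFun
  map_rel := by
    intro p hp
    have h := g.map_rel _ (f.map_rel p hp)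
    simpa [FreeMonoid.map_comp] using h

end MonPresHom

/-- The standard presentation of a monoid `M`: generators are the elements of
`M`, and relations are all pairs of words whose products in `M` coincide. -/
def stdPres (M : Type) [Monoid M] : MonPres where
  gen := M
  rel := {p | FreeMonoid.lift (id : M → M) p.1 = FreeMonoid.lift (id : M → M) p.2}


namespace MonPresAux

lemma std_con_eq (M : Type) [Monoid M] :
    (stdPres M).con = Con.ker (FreeMonoid.lift (id : M → M)) := by
  apply le_antisymm
  · exact Con.conGen_le.mpr fun u v h => h
  · intro u v h
    exact ConGen.Rel.of _ _ h

lemma stdLiftSurj (M : Type) [Monoid M] :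
    Function.Surjective (FreeMonoid.lift (id : M → M)) := fun m =>
  ⟨FreeMonoid.of m, by simp⟩

noncomputable def stdEquiv (M : Type) [Monoid M] : (stdPres M).Presented ≃* M :=
  (Con.congr (MulEquiv.refl _) ((std_con_eq M).trans (Con.ext fun _ _ => Iff.rfl))).trans
    (Con.quotientKerEquivOfSurjective _ (stdLiftSurj M))

lemma stdEquiv_mk (M : Type) [Monoid M] (w : FreeMonoid M) :
    stdEquiv M (Con.mk' _ w) = FreeMonoid.lift (id : M → M) w := rfl

/-- morphism from any presentation to the standard presentation of `M`,
given a hom `φ : ⟦P⟧ →* M`. -/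
def toStd {P : MonPres} {M : Type} [Monoid M] (φ : P.Presented →* M) :
    MonPresHom P (stdPres M) where
  toFun := fun g => φ (Con.mk' P.con (FreeMonoid.of g))
  map_rel := by
    intro p hp
    have key : ((FreeMonoid.lift (id : M → M)).comp
        (FreeMonoid.map (fun g => φ (Con.mk' P.con (FreeMonoid.of g)))))
        = φ.comp (Con.mk' P.con) := by
      apply FreeMonoid.hom_eq
      intro g
      simp
    have hcon : Con.mk' P.con p.1 = Con.mk' P.con p.2 :=
      (Con.eq _).mpr (ConGen.Rel.of _ _ hp)
    show FreeMonoid.lift (id : M → M) _ = FreeMonoid.lift (id : M → M) _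
    calc FreeMonoid.lift (id : M → M)
          (FreeMonoid.map (fun g => φ (Con.mk' P.con (FreeMonoid.of g))) p.1)
        = φ (Con.mk' P.con p.1) := DFunLike.congr_fun key p.1
      _ = φ (Con.mk' P.con p.2) := by rw [hcon]
      _ = FreeMonoid.lift (id : M → M)
          (FreeMonoid.map (fun g => φ (Con.mk' P.con (FreeMonoid.of g))) p.2) :=
          (DFunLike.congr_fun key p.2).symm

lemma stdEquiv_comp_induced {P : MonPres} {M : Type} [Monoid M]
    (φ : P.Presented →* M) (x : P.Presented) :
    stdEquiv M ((toStd φ).induced x) = φ x := by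
  induction x using Con.induction_on with
  | H w =>
    show stdEquiv M (Con.mk' _ (FreeMonoid.map _ w)) = φ (Con.mk' P.con w)
    refine (stdEquiv_mk M _).trans ?_
    have key : ((FreeMonoid.lift (id : M → M)).comp
        (FreeMonoid.map (fun g => φ (Con.mk' P.con (FreeMonoid.of g)))))
        = φ.comp (Con.mk' P.con) := by
      apply FreeMonoid.hom_eq
      intro g
      simp
    exact DFunLike.congr_fun key w

lemma induced_bijective {P : MonPres} {M : Type} [Monoid M]
    (φ : P.Presented →* M) (hφ : Function.Bijective φ) :
    Function.Bijective (toStd φ).induced := by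
  have h : (stdEquiv M : (stdPres M).Presented → M) ∘ (toStd φ).induced = φ :=
    funext (stdEquiv_comp_induced φ)
  have := hφ
  rw [← h] at this
  exact (Function.Bijective.of_comp_iff' (stdEquiv M).bijective _).mp this

end MonPresAux

/-- two presentations present isomorphic monoids iff there is a
cospan of morphisms of presentations inducing isomorphisms on presented
monoids. -/

theorem stmt2 (P Q : MonPres) :
    Nonempty (P.Presented ≃* Q.Presented) ↔
      ∃ (R : MonPres) (f : MonPresHom P R) (g : MonPresHom Q R),
        Function.Bijective f.induced ∧ Function.Bijective g.induced := by
  constructor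
  · rintro ⟨e⟩
    refine ⟨stdPres Q.Presented, MonPresAux.toStd (e : P.Presented →* Q.Presented),
      MonPresAux.toStd (MonoidHom.id Q.Presented), ?_, ?_⟩
    · exact MonPresAux.induced_bijective _ e.bijective
    · exact MonPresAux.induced_bijective _ Function.bijective_id
  · rintro ⟨R, f, g, hf, hg⟩
    exact ⟨(MulEquiv.ofBijective f.induced hf).trans
      (MulEquiv.ofBijective g.induced hg).symm⟩
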